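/- Let a ∈ (0, 1/2), ξ ∈ ℝ, ζ ∈ ℝ², and let μ_a(ξ,ζ) be the principal square root of (ξ + ia)² + |ζ|². Then |Im μ_a(ξ,ζ)| ≤ a for all (ξ,ζ) ∈ ℝ³. -/

import Mathlib

/-- For `a ∈ (0,1/2)`, the principal square root `μ_a(ξ,ζ) = √((ξ+ia)² + |ζ|²)` satisfies
`|Im μ_a| ≤ a` for all `(ξ,ζ) ∈ ℝ³`. -/
theorem stmt6 (a ξ : ℝ) (ha : 0 < a) (ha' : a < 1 / 2) (ζ : EuclideanSpace ℝ (Fin 2)) :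
    |Complex.im ((((ξ : ℂ) + (a : ℂ) * Complex.I) ^ 2 + (‖ζ‖ : ℂ) ^ 2) ^ ((1 : ℂ) / 2))| ≤ a := by
  set r : ℝ := ‖ζ‖ with hr
  set w : ℂ := ((ξ : ℂ) + (a : ℂ) * Complex.I) ^ 2 + (r : ℂ) ^ 2 with hw
  set z : ℂ := w ^ ((1 : ℂ) / 2) with hzdef
  have hz : z ^ 2 = w := by
    rw [hzdef, one_div]
    have : ((2 : ℂ))⁻¹ = (((2 : ℕ) : ℂ))⁻¹ := by norm_num
    rw [this]
    exact Complex.cpow_nat_inv_pow w (by norm_num)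
  have hwre : w.re = ξ ^ 2 - a ^ 2 + r ^ 2 := by
    simp [hw, Complex.add_re, pow_two, Complex.mul_re, Complex.mul_im]
  have hwim : w.im = 2 * a * ξ := by
    simp [hw, Complex.add_im, pow_two, Complex.mul_re, Complex.mul_im]
    ring
  have h1 : z.re ^ 2 - z.im ^ 2 = w.re := by
    rw [← hz]; simp [pow_two, Complex.mul_re]
  have h2 : z.re ^ 2 + z.im ^ 2 = ‖w‖ := by
    have : ‖z‖ ^ 2 = ‖w‖ := by rw [← hz, norm_pow]
    rw [← this, Complex.sq_norm, Complex.normSq_apply]; ring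
  have habs : ‖w‖ ≤ ξ ^ 2 + a ^ 2 + r ^ 2 := by
    have h0 : (0:ℝ) ≤ ξ ^ 2 + a ^ 2 + r ^ 2 := by positivity
    have : ‖w‖ = Real.sqrt ((ξ ^ 2 - a ^ 2 + r ^ 2)^2 + (2*a*ξ)^2) := by
      rw [Complex.norm_def, Complex.normSq_apply, hwre, hwim]; ring_nf
    rw [this]
    have hle : (ξ ^ 2 - a ^ 2 + r ^ 2)^2 + (2*a*ξ)^2 ≤ (ξ ^ 2 + a ^ 2 + r ^ 2)^2 := by
      nlinarith [sq_nonneg r, sq_nonneg a]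
    calc Real.sqrt ((ξ ^ 2 - a ^ 2 + r ^ 2)^2 + (2*a*ξ)^2)
        ≤ Real.sqrt ((ξ ^ 2 + a ^ 2 + r ^ 2)^2) := Real.sqrt_le_sqrt hle
      _ = ξ ^ 2 + a ^ 2 + r ^ 2 := Real.sqrt_sq h0
  have him : z.im ^ 2 ≤ a ^ 2 := by nlinarith
  rw [abs_le]
  constructor <;> nlinarith
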